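/- Let R be a ring, n a non-negative integer, and {M_i}_{i∈I} a family of left R-modules. The direct sum ⊕_{i∈I} M_i is n-weak injective if and only if each M_i is n-weak injective. -/

import Mathlib

/-! Definitions for `n`-weak injective and `n`-weak flat modules over an arbitrary
(associative, unital, possibly noncommutative) ring `R`, following
Amini–Amzil–Bennis, "On n-weak injective and n-weak flat modules".

Left `R`-modules are types with `[Module R M]`; right `R`-modules are types with
`[Module Rᵐᵒᵖ M]`.  `Ext` is the derived functor of the ℤ-linear Yoneda functor on
`ModuleCat R`, and `Tor` is obtained as the left derived functor of the balanced
tensor product `N ⊗_R -` (constructed as a quotient of the ℤ-tensor product). -/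

open CategoryTheory Limits TensorProduct

noncomputable section

universe u

namespace NWeak

variable (R : Type u) [Ring R]

/-- A left `R`-module `U` is *`n`-super finitely presented* if it admits a resolution
`⋯ → F_{n+1} → F_n → ⋯ → F_1 → F_0 → U → 0` by projective modules in which `F_i` is
finitely generated for every `i ≥ n`. -/
def IsNSuperFP (n : ℕ) (U : Type u) [AddCommGroup U] [Module R U] : Prop :=
  ∃ (F : ℕ → ModuleCat.{u} R) (d : ∀ i, F (i + 1) ⟶ F i) (ε : F 0 →ₗ[R] U),
    (∀ i, Module.Projective R (F i)) ∧
    (∀ i, n ≤ i → Module.Finite R (F i)) ∧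
    Function.Surjective ε ∧
    Function.Exact (d 0) ε ∧
    (∀ i, Function.Exact (d (i + 1)) (d i))

/-- A left `R`-module `K` is *special super finitely presented* (relative to `n`) if
there are an `n`-super finitely presented module `U` and a resolution
`⋯ → F_{n+1} → F_n → ⋯ → F_0 → U → 0` as above such that `K ≅ Im (F_n → F_{n-1})`,
where for `n = 0` we read `K_{-1} := U`. -/
def IsSpecialSFP (n : ℕ) (K : Type u) [AddCommGroup K] [Module R K] : Prop :=
  ∃ (F : ℕ → ModuleCat.{u} R) (d : ∀ i, F (i + 1) ⟶ F i) (U : ModuleCat.{u} R)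
    (ε : F 0 ⟶ U),
    (∀ i, Module.Projective R (F i)) ∧
    (∀ i, n ≤ i → Module.Finite R (F i)) ∧
    Function.Surjective ε ∧
    Function.Exact (d 0) ε ∧
    (∀ i, Function.Exact (d (i + 1)) (d i)) ∧
    (match n with
      | 0 => Nonempty (K ≃ₗ[R] U)
      | m + 1 => Nonempty (K ≃ₗ[R] LinearMap.range (d m).hom))

/-- Vanishing of `Ext_R^i(K, M)` for left `R`-modules. -/
def extVanish (i : ℕ) (K : Type u) [AddCommGroup K] [Module R K]
    (M : Type u) [AddCommGroup M] [Module R M] : Prop :=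
  Subsingleton (((Ext ℤ (ModuleCat.{u} R) i).obj
    (Opposite.op (ModuleCat.of R K))).obj (ModuleCat.of R M))

/-- A left `R`-module `M` is *`n`-weak injective* if `Ext_R^{n+1}(U, M) = 0` for every
`n`-super finitely presented left `R`-module `U`. -/
def IsNWeakInjective (n : ℕ) (M : Type u) [AddCommGroup M] [Module R M] : Prop :=
  ∀ (U : ModuleCat.{u} R), IsNSuperFP R n U → extVanish R (n + 1) U M

/-- The left `R`-module `M` has *`n`-weak injective dimension at most `k`* if
`Ext_R^{k+1}(K, M) = 0` for every special super finitely presented left `R`-module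
`K`. -/
def WIDimLE (n k : ℕ) (M : Type u) [AddCommGroup M] [Module R M] : Prop :=
  ∀ (K : ModuleCat.{u} R), IsSpecialSFP R n K → extVanish R (k + 1) K M

/-! ### The balanced tensor product and Tor -/

/-- The additive subgroup of `N ⊗[ℤ] K` generated by the balancing relations
`(n·r) ⊗ k - n ⊗ (r·k)`. -/
def balRel (N : Type u) [AddCommGroup N] [Module Rᵐᵒᵖ N]
    (K : Type u) [AddCommGroup K] [Module R K] : AddSubgroup (N ⊗[ℤ] K) :=
  AddSubgroup.closure
    {x | ∃ (a : N) (r : R) (b : K),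
      x = (MulOpposite.op r • a) ⊗ₜ[ℤ] b - a ⊗ₜ[ℤ] (r • b)}

/-- The balanced tensor product `N ⊗_R K` of a right `R`-module `N` and a left
`R`-module `K`, realized as a quotient of `N ⊗[ℤ] K`. -/
def RTensor (N : Type u) [AddCommGroup N] [Module Rᵐᵒᵖ N]
    (K : Type u) [AddCommGroup K] [Module R K] : Type u :=
  (N ⊗[ℤ] K) ⧸ balRel R N K

instance (N : Type u) [AddCommGroup N] [Module Rᵐᵒᵖ N]
    (K : Type u) [AddCommGroup K] [Module R K] : AddCommGroup (RTensor R N K) :=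
  inferInstanceAs (AddCommGroup ((N ⊗[ℤ] K) ⧸ balRel R N K))

variable {R}

/-- Functoriality of the balanced tensor product in the left-module variable. -/
def balMapRight (N : Type u) [AddCommGroup N] [Module Rᵐᵒᵖ N]
    {K K' : Type u} [AddCommGroup K] [Module R K] [AddCommGroup K'] [Module R K']
    (f : K →ₗ[R] K') : RTensor R N K →+ RTensor R N K' :=
  QuotientAddGroup.map _ _
    (TensorProduct.map (LinearMap.id : N →ₗ[ℤ] N) (f.restrictScalars ℤ)).toAddMonoidHom
    (by
      rw [balRel, AddSubgroup.closure_le]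
      rintro x ⟨a, r, b, rfl⟩
      simp only [SetLike.mem_coe, AddSubgroup.mem_comap, LinearMap.toAddMonoidHom_coe,
        map_sub, TensorProduct.map_tmul, LinearMap.coe_restrictScalars, LinearMap.id_coe,
        id_eq, LinearMap.map_smul]
      exact AddSubgroup.subset_closure ⟨a, r, f b, rfl⟩)

/-- Functoriality of the balanced tensor product in the right-module variable. -/
def balMapLeft (K : Type u) [AddCommGroup K] [Module R K]
    {N N' : Type u} [AddCommGroup N] [Module Rᵐᵒᵖ N] [AddCommGroup N'] [Module Rᵐᵒᵖ N']
    (g : N →ₗ[Rᵐᵒᵖ] N') : RTensor R N K →+ RTensor R N' K :=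
  QuotientAddGroup.map _ _
    (TensorProduct.map (g.restrictScalars ℤ) (LinearMap.id : K →ₗ[ℤ] K)).toAddMonoidHom
    (by
      rw [balRel, AddSubgroup.closure_le]
      rintro x ⟨a, r, b, rfl⟩
      simp only [SetLike.mem_coe, AddSubgroup.mem_comap, LinearMap.toAddMonoidHom_coe,
        map_sub, TensorProduct.map_tmul, LinearMap.coe_restrictScalars, LinearMap.id_coe,
        id_eq, LinearMap.map_smul]
      exact AddSubgroup.subset_closure ⟨g a, r, b, rfl⟩)

lemma balMapRight_mk (N : Type u) [AddCommGroup N] [Module Rᵐᵒᵖ N]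
    {K K' : Type u} [AddCommGroup K] [Module R K] [AddCommGroup K'] [Module R K']
    (f : K →ₗ[R] K') (y : N ⊗[ℤ] K) :
    balMapRight N f (QuotientAddGroup.mk y)
      = QuotientAddGroup.mk (TensorProduct.map (LinearMap.id : N →ₗ[ℤ] N)
          (f.restrictScalars ℤ) y) := rfl

variable (R)

/-- The functor `K ↦ N ⊗_R K` from left `R`-modules to abelian groups, for a fixed
right `R`-module `N`. -/
def tensorFunctor (N : Type u) [AddCommGroup N] [Module Rᵐᵒᵖ N] :
    ModuleCat.{u} R ⥤ AddCommGrpCat.{u} where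
  obj K := AddCommGrpCat.of (RTensor R N K)
  map {K K'} f := AddCommGrpCat.ofHom (balMapRight N f.hom)
  map_id K := by
    refine AddCommGrpCat.ext fun x => ?_
    refine QuotientAddGroup.induction_on x fun y => ?_
    show balMapRight N (LinearMap.id) (QuotientAddGroup.mk y) = QuotientAddGroup.mk y
    rw [balMapRight_mk]
    congr 1
    refine TensorProduct.induction_on y (by simp) (fun a b => by simp) ?_
    intro s t hs ht
    simp_all [map_add]
  map_comp {K K' K''} f g := by
    refine AddCommGrpCat.ext fun x => ?_
    refine QuotientAddGroup.induction_on x fun y => ?_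
    show balMapRight N (g.hom.comp f.hom) (QuotientAddGroup.mk y)
      = balMapRight N g.hom (balMapRight N f.hom (QuotientAddGroup.mk y))
    rw [balMapRight_mk, balMapRight_mk, balMapRight_mk]
    congr 1
    refine TensorProduct.induction_on y (by simp) (fun a b => by simp) ?_
    intro s t hs ht
    simp_all [map_add]

instance (N : Type u) [AddCommGroup N] [Module Rᵐᵒᵖ N] : (tensorFunctor R N).Additive where
  map_add {K K'} {f g} := by
    refine AddCommGrpCat.ext fun x => ?_
    refine QuotientAddGroup.induction_on x fun y => ?_
    show balMapRight N (f + g).hom (QuotientAddGroup.mk y)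
      = balMapRight N f.hom (QuotientAddGroup.mk y) + balMapRight N g.hom (QuotientAddGroup.mk y)
    rw [balMapRight_mk, balMapRight_mk, balMapRight_mk]
    erw [← QuotientAddGroup.mk_add]
    congr 1
    refine TensorProduct.induction_on y (by simp)
      (fun a b => by
        simp only [TensorProduct.map_tmul, LinearMap.coe_restrictScalars, LinearMap.id_coe, id_eq]
        rw [show (f + g) b = f b + g b from rfl, TensorProduct.tmul_add]) ?_
    intro s t hs ht
    simp_all [map_add]
    abel

/-- Vanishing of `Tor_i^R(N, K)` for a right `R`-module `N` and a left `R`-module `K`: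
the `i`-th left derived functor of `N ⊗_R -` vanishes at `K`. -/
def torVanish (i : ℕ) (N : Type u) [AddCommGroup N] [Module Rᵐᵒᵖ N]
    (K : Type u) [AddCommGroup K] [Module R K] : Prop :=
  Subsingleton (((tensorFunctor R N).leftDerived i).obj (ModuleCat.of R K))

/-- A right `R`-module `N` is *`n`-weak flat* if `Tor^R_{n+1}(N, U) = 0` for every
`n`-super finitely presented left `R`-module `U`. -/
def IsNWeakFlat (n : ℕ) (N : Type u) [AddCommGroup N] [Module Rᵐᵒᵖ N] : Prop :=
  ∀ (U : ModuleCat.{u} R), IsNSuperFP R n U → torVanish R (n + 1) N U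

/-- The right `R`-module `N` has *`n`-weak flat dimension at most `k`* if
`Tor^R_{k+1}(N, K) = 0` for every special super finitely presented left `R`-module
`K`. -/
def WFDimLE (n k : ℕ) (N : Type u) [AddCommGroup N] [Module Rᵐᵒᵖ N] : Prop :=
  ∀ (K : ModuleCat.{u} R), IsSpecialSFP R n K → torVanish R (k + 1) N K

/-! ### Character modules -/

/-- The character module `M⋆ = Hom_ℤ(M, ℚ/ℤ)` of a left `R`-module is a right
`R`-module via `(f · r) (m) = f (r · m)`. -/
instance charModuleRight (M : Type u) [AddCommGroup M] [Module R M] :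
    Module Rᵐᵒᵖ (CharacterModule M) where
  smul ρ f := f.comp (DistribMulAction.toAddMonoidHom M ρ.unop)
  one_smul f := CharacterModule.ext _ fun m => congrArg f (one_smul R m)
  mul_smul ρ σ f := CharacterModule.ext _ fun m => congrArg f (mul_smul σ.unop ρ.unop m)
  smul_zero ρ := CharacterModule.ext _ fun _ => rfl
  smul_add ρ f g := CharacterModule.ext _ fun _ => rfl
  add_smul ρ σ f := CharacterModule.ext _ fun m => by
    show f ((ρ.unop + σ.unop) • m) = f (ρ.unop • m) + f (σ.unop • m)
    rw [add_smul, map_add]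
  zero_smul f := CharacterModule.ext _ fun m => by
    show f ((0 : R) • m) = 0
    rw [zero_smul, map_zero]

/-- The character module `N⋆ = Hom_ℤ(N, ℚ/ℤ)` of a right `R`-module is a left
`R`-module via `(r · f) (m) = f (m · r)`. -/
instance charModuleLeft (N : Type u) [AddCommGroup N] [Module Rᵐᵒᵖ N] :
    Module R (CharacterModule N) where
  smul r f := f.comp (DistribMulAction.toAddMonoidHom N (MulOpposite.op r))
  one_smul f := CharacterModule.ext _ fun m => congrArg f (one_smul Rᵐᵒᵖ m)
  mul_smul r s f := CharacterModule.ext _ fun m => congrArg f (by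
    show (MulOpposite.op (r * s)) • m = (MulOpposite.op s) • (MulOpposite.op r) • m
    rw [← mul_smul, MulOpposite.op_mul])
  smul_zero r := CharacterModule.ext _ fun _ => rfl
  smul_add r f g := CharacterModule.ext _ fun _ => rfl
  add_smul r s f := CharacterModule.ext _ fun m => by
    show f ((MulOpposite.op r + MulOpposite.op s) • m)
      = f ((MulOpposite.op r) • m) + f ((MulOpposite.op s) • m)
    rw [add_smul, map_add]
  zero_smul f := CharacterModule.ext _ fun m => by
    show f ((0 : Rᵐᵒᵖ) • m) = 0
    rw [zero_smul, map_zero]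

/-! ### Purity and flatness -/

/-- A submodule `N` of a left `R`-module `M` is *pure* if for every right `R`-module
`L` the induced map `L ⊗_R N → L ⊗_R M` is injective. -/
def IsPureSubmodule (M : Type u) [AddCommGroup M] [Module R M] (N : Submodule R M) :
    Prop :=
  ∀ (L : Type u) [AddCommGroup L] [Module Rᵐᵒᵖ L],
    Function.Injective (balMapRight L N.subtype)

/-- A submodule `N` of a right `R`-module `M` is *pure* if for every left `R`-module
`L` the induced map `N ⊗_R L → M ⊗_R L` is injective. -/
def IsPureSubmoduleRight (M : Type u) [AddCommGroup M] [Module Rᵐᵒᵖ M]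
    (N : Submodule Rᵐᵒᵖ M) : Prop :=
  ∀ (L : Type u) [AddCommGroup L] [Module R L],
    Function.Injective (balMapLeft L N.subtype)

/-- A left `R`-module `M` is *flat* if tensoring with `M` preserves injectivity of
maps of right `R`-modules. -/
def IsFlatLeft (M : Type u) [AddCommGroup M] [Module R M] : Prop :=
  ∀ (A B : Type u) [AddCommGroup A] [Module Rᵐᵒᵖ A] [AddCommGroup B] [Module Rᵐᵒᵖ B]
    (g : A →ₗ[Rᵐᵒᵖ] B), Function.Injective g → Function.Injective (balMapLeft M g)

/-- The left `R`-module `K` has *projective dimension at most `m`*: there is an exact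
sequence `0 → P_m → ⋯ → P_1 → P_0 → K → 0` with all `P_i` projective (encoded by a
projective resolution vanishing in degrees `> m`). -/
def ProjDimLE (K : Type u) [AddCommGroup K] [Module R K] (m : ℕ) : Prop :=
  ∃ (P : ℕ → ModuleCat.{u} R) (d : ∀ i, P (i + 1) ⟶ P i) (ε : P 0 →ₗ[R] K),
    (∀ i, Module.Projective R (P i)) ∧
    Function.Surjective ε ∧
    Function.Exact (d 0) ε ∧
    (∀ i, Function.Exact (d (i + 1)) (d i)) ∧
    (∀ i, m < i → Subsingleton (P i))

end NWeak

namespace NWeakProof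

open NWeak

variable {R : Type u} [Ring R]

lemma subsingleton_iff_isZero {S : Type*} [Ring S] (A : ModuleCat S) :
    Subsingleton A ↔ IsZero A := by
  constructor
  · intro h
    exact ModuleCat.isZero_of_subsingleton A
  · intro h
    refine ⟨fun a b => ?_⟩
    have h0 : (𝟙 A : A ⟶ A) = 0 := h.eq_of_src _ _
    have ha : a = (𝟙 A : A ⟶ A) a := rfl
    have hb : b = (𝟙 A : A ⟶ A) b := rfl
    rw [ha, hb, h0]
    rfl

lemma extVanish_iff {R : Type u} [Ring R] (n : ℕ) (U : ModuleCat.{u} R)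
    (F : ℕ → ModuleCat.{u} R) (d : ∀ i, F (i + 1) ⟶ F i) (ε : F 0 →ₗ[R] U)
    (hproj : ∀ i, Module.Projective R (F i))
    (hsurj : Function.Surjective ε) (hex0 : Function.Exact (d 0) ε)
    (hex : ∀ i, Function.Exact (d (i + 1)) (d i))
    (M : Type u) [AddCommGroup M] [Module R M] :
    NWeak.extVanish R (n + 1) U M ↔
      ∀ f : F (n + 1) ⟶ ModuleCat.of R M, d (n + 1) ≫ f = 0 →
        ∃ g : F n ⟶ ModuleCat.of R M, d n ≫ g = f := by
  have dcomp : ∀ i, d (i + 1) ≫ d i = 0 := fun i => by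
    ext x; exact (hex i).apply_apply_eq_zero x
  let K : ChainComplex (ModuleCat.{u} R) ℕ := ChainComplex.of F d dcomp
  have hd10 : K.d 1 0 = d 0 := ChainComplex.of_d F d 0
  have hε : K.d 1 0 ≫ (ModuleCat.ofHom ε : F 0 ⟶ U) = 0 := by
    rw [hd10]; ext x; exact hex0.apply_apply_eq_zero x
  let π : K ⟶ (ChainComplex.single₀ _).obj U := (K.toSingle₀Equiv U).symm ⟨ModuleCat.ofHom ε, hε⟩
  have hπ0 : π.f 0 = (ModuleCat.ofHom ε : F 0 ⟶ U) := ChainComplex.toSingle₀Equiv_symm_apply_f_zero _ _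
  have hproj' : ∀ i, Projective (K.X i) := fun i => (IsProjective.iff_projective (K.X i)).mp (hproj i)
  have hqi : QuasiIso π := by
    constructor
    intro i
    match i with
    | 0 =>
      rw [ChainComplex.quasiIsoAt₀_iff, ShortComplex.quasiIso_iff_of_zeros'
        _ (K.shape 0 0 (by simp))
        ((HomologicalComplex.isZero_single_obj_X (ComplexShape.down ℕ) 0 U 1
          (by omega)).eq_of_src _ _)
        (((ChainComplex.single₀ (ModuleCat.{u} R)).obj U).shape 0 0 (by simp))]
      have hε0 : (d 0) ≫ (ModuleCat.ofHom ε : F 0 ⟶ U) = 0 := by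
        ext x; exact hex0.apply_apply_eq_zero x
      constructor
      · refine ShortComplex.exact_of_iso
          (ShortComplex.isoMk (S₁ := ShortComplex.mk (d 0) (ModuleCat.ofHom ε : F 0 ⟶ U) hε0)
            (Iso.refl _) (Iso.refl _) (Iso.refl _)
            (by dsimp; simp) (by dsimp; simp) : _ ≅ _) ?_
        rw [ShortComplex.moduleCat_exact_iff]
        intro x hx
        exact (hex0 x).mp hx
      · show Epi (π.f 0)
        exact (ModuleCat.epi_iff_surjective (π.f 0)).mpr (by rw [hπ0]; exact hsurj)
    | (i+1) =>
      rw [quasiIsoAt_iff_exactAt' π (i+1) (ChainComplex.exactAt_succ_single_obj _ _)]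
      rw [K.exactAt_iff' (i+1+1) (i+1) i (by simp) (by simp)]
      have e : K.sc' (i+1+1) (i+1) i ≅ ShortComplex.mk (d (i+1)) (d i) (dcomp i) :=
        ShortComplex.isoMk (Iso.refl _) (Iso.refl _) (Iso.refl _)
          (by dsimp; exact (Category.id_comp _).trans ((ChainComplex.of_d F d (i+1)).symm.trans (Category.comp_id _).symm))
          (by dsimp; exact (Category.id_comp _).trans ((ChainComplex.of_d F d i).symm.trans (Category.comp_id _).symm))
      refine ShortComplex.exact_of_iso e.symm ?_
      rw [ShortComplex.moduleCat_exact_iff]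
      intro x hx
      exact ((hex i) x).mp hx
  let P : ProjectiveResolution U := ⟨K, hproj', π, hqi⟩
  let L := K.linearYonedaObj ℤ (ModuleCat.of R M)
  have e : ((Ext ℤ (ModuleCat.{u} R) (n+1)).obj (Opposite.op U)).obj (ModuleCat.of R M)
      ≅ L.homology (n+1) := P.isoExt (n+1) (ModuleCat.of R M)
  have h1 : NWeak.extVanish R (n+1) U M ↔ Subsingleton (L.homology (n+1)) :=
    Equiv.subsingleton_congr ((forget (ModuleCat ℤ)).mapIso e).toEquiv
  rw [h1, subsingleton_iff_isZero, ← HomologicalComplex.exactAt_iff_isZero_homology,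
    L.exactAt_iff' n (n+1) (n+1+1) (by simp) (by simp), ShortComplex.moduleCat_exact_iff]
  have hdK1 : K.d (n+1) n = d n := ChainComplex.of_d F d n
  have hdK2 : K.d (n+1+1) (n+1) = d (n+1) := ChainComplex.of_d F d (n+1)
  constructor
  · intro h f hf
    obtain ⟨g, hg⟩ := h f (by show K.d (n+1+1) (n+1) ≫ f = 0; rw [hdK2]; exact hf)
    refine ⟨g, ?_⟩
    have : K.d (n+1) n ≫ (g : F n ⟶ ModuleCat.of R M) = f := hg
    rwa [hdK1] at this
  · intro h x hx
    obtain ⟨g, hg⟩ := h x (by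
      have : K.d (n+1+1) (n+1) ≫ (x : F (n+1) ⟶ ModuleCat.of R M) = 0 := hx
      rwa [hdK2] at this)
    refine ⟨g, ?_⟩
    show K.d (n+1) n ≫ (g : F n ⟶ ModuleCat.of R M) = x
    rw [hdK1]; exact hg

end NWeakProof

open NWeak DirectSum in
/-- A direct sum of left `R`-modules is `n`-weak injective if and only
if each summand is `n`-weak injective. -/
theorem directSum_isNWeakInjective_iff
    (R : Type u) [Ring R] (n : ℕ) (ι : Type u) [DecidableEq ι] (M : ι → Type u)
    [∀ i, AddCommGroup (M i)] [∀ i, Module R (M i)] :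
    IsNWeakInjective R n (⨁ i, M i) ↔ ∀ i, IsNWeakInjective R n (M i) := by
  classical
  constructor
  · intro h i U hU
    obtain ⟨F, d, ε, hproj, hfg, hsurj, hex0, hex⟩ := id hU
    rw [NWeakProof.extVanish_iff n U F d ε hproj hsurj hex0 hex (M i)]
    have hD := (NWeakProof.extVanish_iff n U F d ε hproj hsurj hex0 hex (⨁ i, M i)).mp (h U hU)
    intro f hf
    obtain ⟨g, hg⟩ := hD (f ≫ ModuleCat.ofHom (DirectSum.lof R ι M i))
      (by rw [← Category.assoc, hf, Limits.zero_comp])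
    refine ⟨g ≫ ModuleCat.ofHom (DirectSum.component R ι M i), ?_⟩
    have hli : ModuleCat.ofHom (DirectSum.lof R ι M i)
        ≫ ModuleCat.ofHom (DirectSum.component R ι M i) = 𝟙 (ModuleCat.of R (M i)) := by
      ext x
      exact DirectSum.component.lof_self R i x
    rw [← Category.assoc, hg, Category.assoc, hli, Category.comp_id]
  · intro h U hU
    obtain ⟨F, d, ε, hproj, hfg, hsurj, hex0, hex⟩ := id hU
    rw [NWeakProof.extVanish_iff n U F d ε hproj hsurj hex0 hex (⨁ i, M i)]
    intro f hf
    let f' : (F (n + 1) : Type u) →ₗ[R] (⨁ i, M i) := f.hom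
    have hfin : Module.Finite R (F (n+1)) := hfg (n+1) (Nat.le_succ n)
    obtain ⟨s, hs⟩ := hfin.fg_top
    let S : Finset ι := s.sup (fun x => (f' x).support)
    have hsupp : ∀ (x : F (n+1)), ∀ j ∉ S, f' x j = 0 := by
      intro x
      have hx : x ∈ Submodule.span R (s : Set (F (n+1))) := by rw [hs]; trivial
      induction hx using Submodule.span_induction with
      | mem y hy =>
        intro j hj
        refine DFinsupp.notMem_support_iff.mp fun hc => hj ?_
        exact Finset.le_sup (f := fun x => (f' x).support) (Finset.mem_coe.mp hy) hc
      | zero => intro j _; rw [map_zero]; rfl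
      | add x y hx hy ihx ihy =>
        intro j hj
        show f' (x + y) j = 0
        rw [map_add, DirectSum.add_apply, ihx j hj, ihy j hj, add_zero]
      | smul a x hx ih =>
        intro j hj
        show f' (a • x) j = 0
        rw [map_smul, DirectSum.smul_apply, ih j hj, smul_zero]
    have hex' : ∀ i : ι, ∃ g : F n ⟶ ModuleCat.of R (M i),
        d n ≫ g = f ≫ ModuleCat.ofHom (DirectSum.component R ι M i) := fun i =>
      (NWeakProof.extVanish_iff n U F d ε hproj hsurj hex0 hex (M i)).mp (h i U hU) _
        (by rw [← Category.assoc, hf, Limits.zero_comp])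
    choose g hg using hex'
    refine ⟨∑ i ∈ S, g i ≫ ModuleCat.ofHom (DirectSum.lof R ι M i), ?_⟩
    rw [Preadditive.comp_sum]
    ext x : 2
    have h1 : ∀ i : ι, (d n ≫ (g i ≫ ModuleCat.ofHom (DirectSum.lof R ι M i))) x
        = DirectSum.of M i (f' x i) := fun i => by
      rw [← Category.assoc, hg i, ← DirectSum.lof_eq_of R]
      rfl
    have h2 : (∑ i ∈ S, d n ≫ (g i ≫ ModuleCat.ofHom (DirectSum.lof R ι M i))) x
        = ∑ i ∈ S, (d n ≫ (g i ≫ ModuleCat.ofHom (DirectSum.lof R ι M i))) x :=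
      (congrArg (fun φ => φ x) (ModuleCat.hom_sum (fun i => d n ≫ (g i ≫ ModuleCat.ofHom (DirectSum.lof R ι M i))) S)).trans (LinearMap.sum_apply _ _ _)
    rw [h2]
    simp only [h1]
    have hsub : (f' x).support ⊆ S := fun j hj => by
      by_contra hc
      exact DFinsupp.mem_support_iff.mp hj (hsupp x j hc)
    rw [← Finset.sum_subset hsub (fun j _ hj => by
      rw [DFinsupp.notMem_support_iff.mp hj, map_zero])]
    exact DirectSum.sum_support_of (f' x)
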